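/- Let n ≥ 1, let A be an IFM of order n, let λ ∈ (0,1) and let p > 0 be a real number. If for some index j there is a critical path from a critical vertex to j, then (A^m)μ s j → 1 and (A^m)ν s j → 0 as m → ∞ for every index s (powers taken with the maxgeneralized mean–mingeneralized mean operation). -/
import Mathlib


open Filter Topology

/-- `A` (given by membership part `Amu` and non-membership part `Anu`) is an
intuitionistic fuzzy matrix. -/
def IsIFM (n : ℕ) (Amu Anu : Fin n → Fin n → ℝ) : Prop :=
  ∀ i j, 0 ≤ Amu i j ∧ 0 ≤ Anu i j ∧ Amu i j + Anu i j ≤ 1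

/-- Powers of an IFM under the maxgeneralized mean–mingeneralized mean operation
with parameters `lam` and exponent `p`:
`A^1 = A` and `A^(k+1) = A^k ∘ A`, where
`(X ∘ A)μ i j = max_t (lam·(Xμ i t)^p + (1-lam)·(Aμ t j)^p)^(1/p)` and
`(X ∘ A)ν i j = min_t (lam·(Xν i t)^p + (1-lam)·(Aν t j)^p)^(1/p)`.
(The value at `0` is irrelevant; it is set to `A`.) -/
noncomputable def gmPow (n : ℕ) (lam p : ℝ) (Amu Anu : Fin n → Fin n → ℝ) :
    ℕ → (Fin n → Fin n → ℝ) × (Fin n → Fin n → ℝ)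
  | 0 => (Amu, Anu)
  | 1 => (Amu, Anu)
  | m + 2 =>
    let X := gmPow n lam p Amu Anu (m + 1)
    (fun i j => ⨆ t : Fin n, (lam * X.1 i t ^ p + (1 - lam) * Amu t j ^ p) ^ (1 / p),
     fun i j => ⨅ t : Fin n, (lam * X.2 i t ^ p + (1 - lam) * Anu t j ^ p) ^ (1 / p))

/-- The edge `(i,j)` is critical: `Aμ i j = 1` and `Aν i j = 0`. -/
def CritEdge (n : ℕ) (Amu Anu : Fin n → Fin n → ℝ) (i j : Fin n) : Prop :=
  Amu i j = 1 ∧ Anu i j = 0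

/-- `v` is a critical vertex: it lies on some critical circuit. -/
def CritVertex (n : ℕ) (Amu Anu : Fin n → Fin n → ℝ) (v : Fin n) : Prop :=
  ∃ h : ℕ, 1 ≤ h ∧ ∃ Q : Fin (h + 1) → Fin n,
    Q 0 = Q (Fin.last h) ∧
    (∀ k : Fin h, CritEdge n Amu Anu (Q k.castSucc) (Q k.succ)) ∧ ∃ k, Q k = v

/-- There is a critical path (of some length `m ≥ 1`) from a critical vertex to `j`. -/
def CritPathTo (n : ℕ) (Amu Anu : Fin n → Fin n → ℝ) (j : Fin n) : Prop :=
  ∃ m : ℕ, 1 ≤ m ∧ ∃ P : Fin (m + 1) → Fin n,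
    CritVertex n Amu Anu (P 0) ∧ P (Fin.last m) = j ∧
    ∀ k : Fin m, CritEdge n Amu Anu (P k.castSucc) (P k.succ)

/-- A critical walk of length `ℓ` ending at `j` (indexed by `ℕ`). -/
def WalkTo (n : ℕ) (Amu Anu : Fin n → Fin n → ℝ) (ℓ : ℕ) (j : Fin n) : Prop :=
  ∃ f : ℕ → Fin n, f ℓ = j ∧ ∀ k < ℓ, CritEdge n Amu Anu (f k) (f (k + 1))

lemma gmPow_ss (n : ℕ) (lam p : ℝ) (Amu Anu : Fin n → Fin n → ℝ) (m : ℕ) :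
    gmPow n lam p Amu Anu (m + 2) =
    (fun i j => ⨆ t : Fin n,
        (lam * (gmPow n lam p Amu Anu (m + 1)).1 i t ^ p + (1 - lam) * Amu t j ^ p) ^ (1 / p),
     fun i j => ⨅ t : Fin n,
        (lam * (gmPow n lam p Amu Anu (m + 1)).2 i t ^ p + (1 - lam) * Anu t j ^ p) ^ (1 / p)) := by
  rw [gmPow]

lemma exists_long_walk {n : ℕ} {Amu Anu : Fin n → Fin n → ℝ} {j : Fin n}
    (hcrit : CritPathTo n Amu Anu j) (L : ℕ) :
    ∃ ℓ, L ≤ ℓ ∧ WalkTo n Amu Anu ℓ j := by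
  obtain ⟨m₀, hm₀, P, ⟨h, hh, Q, hQ0, hQe, k₀, hk₀⟩, hPlast, hPe⟩ := hcrit
  have hhpos : 0 < h := hh
  set w : ℕ → Fin n := fun k => Q ⟨k % h, by have := Nat.mod_lt k hhpos; omega⟩ with hw
  have hwedge : ∀ k, CritEdge n Amu Anu (w k) (w (k + 1)) := by
    intro k
    have ha : k % h < h := Nat.mod_lt _ hhpos
    have hdm := Nat.div_add_mod k h
    have he := hQe ⟨k % h, ha⟩
    have h1 : w k = Q (Fin.castSucc ⟨k % h, ha⟩) := by
      simp only [hw]; congr 1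
    by_cases hc : k % h + 1 = h
    · have hk1 : k + 1 = h * (k / h + 1) := by
        have hmul : h * (k / h + 1) = h * (k / h) + h := by ring
        omega
      have hmod : (k + 1) % h = 0 := by rw [hk1, Nat.mul_mod_right]
      have h2 : w (k + 1) = Q (Fin.succ ⟨k % h, ha⟩) := by
        simp only [hw]
        have : Q 0 = Q (Fin.succ ⟨k % h, ha⟩) := by
          rw [hQ0]; congr 1; ext; simp [hc]
        rw [← this]; congr 1; ext; simp [hmod]
      rw [h1, h2]; exact he
    · have hmod : (k + 1) % h = k % h + 1 := by
        have hk1 : k + 1 = h * (k / h) + (k % h + 1) := by omega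
        rw [hk1, Nat.mul_add_mod, Nat.mod_eq_of_lt (by omega)]
      have h2 : w (k + 1) = Q (Fin.succ ⟨k % h, ha⟩) := by
        simp only [hw]; congr 1; ext; simp [hmod]
      rw [h1, h2]; exact he
  -- the base point on the circuit
  have hQv : Q ⟨k₀.val % h, by have := Nat.mod_lt k₀.val hhpos; omega⟩ = P 0 := by
    rcases Nat.lt_or_ge k₀.val h with hlt | hge
    · rw [← hk₀]; congr 1; ext; simp [Nat.mod_eq_of_lt hlt]
    · have hk₀h : k₀.val = h := by have := k₀.isLt; omega
      have : k₀ = Fin.last h := by ext; simpa using hk₀h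
      rw [← hk₀, this, ← hQ0]; congr 1; ext
      simp [hk₀h, Nat.mod_self]
  set N := k₀.val % h + L * h with hN
  have hmodN : N % h = k₀.val % h := by
    rw [hN, Nat.add_mul_mod_self_right]
    exact Nat.mod_eq_of_lt (Nat.mod_lt _ hhpos)
  have hwN : w N = P 0 := by
    rw [← hQv]
    simp only [hw]
    congr 1
    simp only [Fin.mk.injEq]
    exact hmodN
  have hL : L ≤ N + m₀ := by
    have := Nat.le_mul_of_pos_right L hhpos
    omega
  refine ⟨N + m₀, hL, fun k => if k ≤ N then w k
      else P ⟨min (k - N) m₀, Nat.lt_succ_of_le (Nat.min_le_right _ _)⟩, ?_, ?_⟩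
  · dsimp only
    rw [if_neg (by omega)]
    rw [← hPlast]
    congr 1
    ext
    simp only [Fin.val_last]
    omega
  · intro k hk
    dsimp only
    rcases Nat.lt_or_ge k N with hlt | hge
    · rw [if_pos hlt.le, if_pos (show k + 1 ≤ N from hlt)]
      exact hwedge k
    · have hkN : k - N < m₀ := by omega
      rw [if_neg (by omega : ¬ k + 1 ≤ N)]
      have hsucc : (⟨min (k + 1 - N) m₀, Nat.lt_succ_of_le (Nat.min_le_right _ _)⟩ : Fin (m₀ + 1))
          = Fin.succ ⟨k - N, hkN⟩ := by
        ext
        simp only [Fin.val_succ]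
        omega
      rw [hsucc]
      rcases Nat.eq_or_lt_of_le hge with heq | hlt'
      · rw [if_pos (le_of_eq heq.symm)]
        have hwk : w k = P 0 := heq ▸ hwN
        rw [hwk, show (0 : Fin (m₀ + 1)) = Fin.castSucc ⟨k - N, hkN⟩ by
          ext; simp only [Fin.val_zero, Fin.coe_castSucc]; omega]
        exact hPe ⟨k - N, hkN⟩
      · rw [if_neg (by omega : ¬ k ≤ N)]
        have hcast : (⟨min (k - N) m₀, Nat.lt_succ_of_le (Nat.min_le_right _ _)⟩ : Fin (m₀ + 1))
            = Fin.castSucc ⟨k - N, hkN⟩ := by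
          ext
          simp only [Fin.coe_castSucc]
          omega
        rw [hcast]
        exact hPe ⟨k - N, hkN⟩

lemma gmPow_mem {n : ℕ} (hn : 1 ≤ n) {Amu Anu : Fin n → Fin n → ℝ} (hA : IsIFM n Amu Anu)
    {lam p : ℝ} (hlam : lam ∈ Set.Ioo (0 : ℝ) 1) (hp : 0 < p) :
    ∀ m i j, (0 ≤ (gmPow n lam p Amu Anu m).1 i j ∧ (gmPow n lam p Amu Anu m).1 i j ≤ 1)
      ∧ (0 ≤ (gmPow n lam p Amu Anu m).2 i j ∧ (gmPow n lam p Amu Anu m).2 i j ≤ 1) := by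
  haveI : Nonempty (Fin n) := ⟨⟨0, hn⟩⟩
  have base : ∀ i j, (0 ≤ Amu i j ∧ Amu i j ≤ 1) ∧ (0 ≤ Anu i j ∧ Anu i j ≤ 1) := by
    intro i j; obtain ⟨h1, h2, h3⟩ := hA i j
    exact ⟨⟨h1, by linarith⟩, ⟨h2, by linarith⟩⟩
  intro m
  induction m with
  | zero => exact base
  | succ m ih =>
    rcases m with _ | k
    · exact base
    · intro i j
      rw [gmPow_ss]
      dsimp only
      obtain ⟨hl0, hl1⟩ := hlam
      have keyμ : ∀ t : Fin n, 0 ≤ (lam * (gmPow n lam p Amu Anu (k + 1)).1 i t ^ p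
          + (1 - lam) * Amu t j ^ p) ^ (1 / p) ∧
          (lam * (gmPow n lam p Amu Anu (k + 1)).1 i t ^ p
          + (1 - lam) * Amu t j ^ p) ^ (1 / p) ≤ 1 := by
        intro t
        obtain ⟨⟨ha0, ha1⟩, -⟩ := ih i t
        obtain ⟨⟨hb0, hb1⟩, -⟩ := base t j
        have hap : (gmPow n lam p Amu Anu (k + 1)).1 i t ^ p ≤ 1 := Real.rpow_le_one ha0 ha1 hp.le
        have hbp : Amu t j ^ p ≤ 1 := Real.rpow_le_one hb0 hb1 hp.le
        have hap0 : (0:ℝ) ≤ (gmPow n lam p Amu Anu (k + 1)).1 i t ^ p := Real.rpow_nonneg ha0 _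
        have hbp0 : (0:ℝ) ≤ Amu t j ^ p := Real.rpow_nonneg hb0 _
        constructor
        · apply Real.rpow_nonneg; nlinarith
        · apply Real.rpow_le_one (by nlinarith) (by nlinarith) (by positivity)
      have keyν : ∀ t : Fin n, 0 ≤ (lam * (gmPow n lam p Amu Anu (k + 1)).2 i t ^ p
          + (1 - lam) * Anu t j ^ p) ^ (1 / p) ∧
          (lam * (gmPow n lam p Amu Anu (k + 1)).2 i t ^ p
          + (1 - lam) * Anu t j ^ p) ^ (1 / p) ≤ 1 := by
        intro t
        obtain ⟨-, ha0, ha1⟩ := ih i t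
        obtain ⟨-, hb0, hb1⟩ := base t j
        have hap : (gmPow n lam p Amu Anu (k + 1)).2 i t ^ p ≤ 1 := Real.rpow_le_one ha0 ha1 hp.le
        have hbp : Anu t j ^ p ≤ 1 := Real.rpow_le_one hb0 hb1 hp.le
        have hap0 : (0:ℝ) ≤ (gmPow n lam p Amu Anu (k + 1)).2 i t ^ p := Real.rpow_nonneg ha0 _
        have hbp0 : (0:ℝ) ≤ Anu t j ^ p := Real.rpow_nonneg hb0 _
        constructor
        · apply Real.rpow_nonneg; nlinarith
        · apply Real.rpow_le_one (by nlinarith) (by nlinarith) (by positivity)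
      have t₀ : Fin n := ⟨0, hn⟩
      refine ⟨⟨?_, ?_⟩, ?_, ?_⟩
      · refine le_trans ?_ (le_ciSup (Set.Finite.bddAbove (Set.finite_range _)) t₀)
        exact (keyμ t₀).1
      · exact ciSup_le fun t => (keyμ t).2
      · exact le_ciInf fun t => (keyν t).1
      · refine le_trans (ciInf_le (Set.Finite.bddBelow (Set.finite_range _)) t₀) ?_
        exact (keyν t₀).2

lemma mu_lower {n : ℕ} (hn : 1 ≤ n) {Amu Anu : Fin n → Fin n → ℝ} (hA : IsIFM n Amu Anu)
    {lam p : ℝ} (hlam : lam ∈ Set.Ioo (0 : ℝ) 1) (hp : 0 < p) :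
    ∀ ℓ : ℕ, 1 ≤ ℓ → ∀ j : Fin n, WalkTo n Amu Anu ℓ j → ∀ m, ℓ ≤ m → ∀ s : Fin n,
      (1 - lam ^ (ℓ - 1)) ^ (1 / p) ≤ (gmPow n lam p Amu Anu m).1 s j := by
  haveI : Nonempty (Fin n) := ⟨⟨0, hn⟩⟩
  obtain ⟨hl0, hl1⟩ := hlam
  intro ℓ hℓ
  induction ℓ, hℓ using Nat.le_induction with
  | base =>
    intro j _ m _ s
    simp only [Nat.sub_self, pow_zero, sub_self, Real.zero_rpow (one_div_ne_zero hp.ne')]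
    exact ((gmPow_mem hn hA ⟨hl0, hl1⟩ hp m s j).1).1
  | succ ℓ hℓ ih =>
    intro j hwalk m hm s
    obtain ⟨f, hfl, hfe⟩ := hwalk
    obtain ⟨k, rfl⟩ : ∃ k, m = k + 2 := ⟨m - 2, by omega⟩
    rw [gmPow_ss]
    dsimp only
    have hwalkℓ : WalkTo n Amu Anu ℓ (f ℓ) := ⟨f, rfl, fun a ha => hfe a (by omega)⟩
    have hIH := ih (f ℓ) hwalkℓ (k + 1) (by omega) s
    have hedge := hfe ℓ (by omega)
    rw [hfl] at hedge
    have hc0 : 0 ≤ (gmPow n lam p Amu Anu (k + 1)).1 s (f ℓ) :=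
      ((gmPow_mem hn hA ⟨hl0, hl1⟩ hp (k + 1) s (f ℓ)).1).1
    have h1lam : (0:ℝ) ≤ 1 - lam ^ (ℓ - 1) := by
      have := pow_le_one₀ hl0.le hl1.le (n := ℓ - 1); linarith
    have hcp : 1 - lam ^ (ℓ - 1) ≤ (gmPow n lam p Amu Anu (k + 1)).1 s (f ℓ) ^ p := by
      calc 1 - lam ^ (ℓ - 1) = ((1 - lam ^ (ℓ - 1)) ^ (1 / p)) ^ p := by
            rw [← Real.rpow_mul h1lam, one_div_mul_cancel hp.ne', Real.rpow_one]
        _ ≤ _ := Real.rpow_le_rpow (Real.rpow_nonneg h1lam _) hIH hp.le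
    have hlampow : lam ^ ℓ = lam * lam ^ (ℓ - 1) := by
      rw [← pow_succ']; congr 1; omega
    have hinner : 1 - lam ^ ℓ ≤
        lam * (gmPow n lam p Amu Anu (k + 1)).1 s (f ℓ) ^ p + (1 - lam) * Amu (f ℓ) j ^ p := by
      rw [hedge.1, Real.one_rpow]
      nlinarith
    have h0l : (0:ℝ) ≤ 1 - lam ^ ℓ := by
      have := pow_le_one₀ hl0.le hl1.le (n := ℓ); linarith
    refine le_trans ?_ (le_ciSup (Set.Finite.bddAbove (Set.finite_range _)) (f ℓ))
    have hres : (1 - lam ^ ℓ) ^ (1 / p) ≤ (lam * (gmPow n lam p Amu Anu (k + 1)).1 s (f ℓ) ^ p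
        + (1 - lam) * Amu (f ℓ) j ^ p) ^ (1 / p) :=
      Real.rpow_le_rpow h0l hinner (by positivity)
    simpa using hres

lemma nu_upper {n : ℕ} (hn : 1 ≤ n) {Amu Anu : Fin n → Fin n → ℝ} (hA : IsIFM n Amu Anu)
    {lam p : ℝ} (hlam : lam ∈ Set.Ioo (0 : ℝ) 1) (hp : 0 < p) :
    ∀ ℓ : ℕ, 1 ≤ ℓ → ∀ j : Fin n, WalkTo n Amu Anu ℓ j → ∀ m, ℓ ≤ m → ∀ s : Fin n,
      (gmPow n lam p Amu Anu m).2 s j ≤ (lam ^ (ℓ - 1)) ^ (1 / p) := by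
  haveI : Nonempty (Fin n) := ⟨⟨0, hn⟩⟩
  obtain ⟨hl0, hl1⟩ := hlam
  intro ℓ hℓ
  induction ℓ, hℓ using Nat.le_induction with
  | base =>
    intro j _ m _ s
    simp only [Nat.sub_self, pow_zero, Real.one_rpow]
    exact ((gmPow_mem hn hA ⟨hl0, hl1⟩ hp m s j).2).2
  | succ ℓ hℓ ih =>
    intro j hwalk m hm s
    obtain ⟨f, hfl, hfe⟩ := hwalk
    obtain ⟨k, rfl⟩ : ∃ k, m = k + 2 := ⟨m - 2, by omega⟩
    rw [gmPow_ss]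
    dsimp only
    have hwalkℓ : WalkTo n Amu Anu ℓ (f ℓ) := ⟨f, rfl, fun a ha => hfe a (by omega)⟩
    have hIH := ih (f ℓ) hwalkℓ (k + 1) (by omega) s
    have hedge := hfe ℓ (by omega)
    rw [hfl] at hedge
    have hc0 : 0 ≤ (gmPow n lam p Amu Anu (k + 1)).2 s (f ℓ) :=
      ((gmPow_mem hn hA ⟨hl0, hl1⟩ hp (k + 1) s (f ℓ)).2).1
    have hlp0 : (0:ℝ) ≤ lam ^ (ℓ - 1) := by positivity
    have hcp : (gmPow n lam p Amu Anu (k + 1)).2 s (f ℓ) ^ p ≤ lam ^ (ℓ - 1) := by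
      calc (gmPow n lam p Amu Anu (k + 1)).2 s (f ℓ) ^ p
          ≤ ((lam ^ (ℓ - 1)) ^ (1 / p)) ^ p := Real.rpow_le_rpow hc0 hIH hp.le
        _ = lam ^ (ℓ - 1) := by
            rw [← Real.rpow_mul hlp0, one_div_mul_cancel hp.ne', Real.rpow_one]
    have hlampow : lam ^ ℓ = lam * lam ^ (ℓ - 1) := by
      rw [← pow_succ']; congr 1; omega
    have hinner : lam * (gmPow n lam p Amu Anu (k + 1)).2 s (f ℓ) ^ p
        + (1 - lam) * Anu (f ℓ) j ^ p ≤ lam ^ ℓ := by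
      rw [hedge.2, Real.zero_rpow hp.ne']
      nlinarith
    have hin0 : (0:ℝ) ≤ lam * (gmPow n lam p Amu Anu (k + 1)).2 s (f ℓ) ^ p
        + (1 - lam) * Anu (f ℓ) j ^ p := by
      have := Real.rpow_nonneg hc0 p
      have h2 : (0:ℝ) ≤ Anu (f ℓ) j ^ p := Real.rpow_nonneg (hA (f ℓ) j).2.1 p
      nlinarith
    refine le_trans (ciInf_le (Set.Finite.bddBelow (Set.finite_range _)) (f ℓ)) ?_
    have hres : (lam * (gmPow n lam p Amu Anu (k + 1)).2 s (f ℓ) ^ p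
        + (1 - lam) * Anu (f ℓ) j ^ p) ^ (1 / p) ≤ (lam ^ ℓ) ^ (1 / p) :=
      Real.rpow_le_rpow hin0 hinner (by positivity)
    simpa using hres

/-- Theorem 3.3 (sufficiency): if there is a critical path from a critical
vertex to `j`, then every entry of column `j` of the limit of the
maxgeneralized mean–mingeneralized mean powers is `⟨1,0⟩`. -/
theorem critPath_implies_gmPow_column_one (n : ℕ) (hn : 1 ≤ n)
    (Amu Anu : Fin n → Fin n → ℝ) (hA : IsIFM n Amu Anu)
    (lam p : ℝ) (hlam : lam ∈ Set.Ioo (0 : ℝ) 1) (hp : 0 < p) (j : Fin n)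
    (hcrit : CritPathTo n Amu Anu j) :
    ∀ s : Fin n,
      Tendsto (fun m => (gmPow n lam p Amu Anu m).1 s j) atTop (𝓝 1) ∧
      Tendsto (fun m => (gmPow n lam p Amu Anu m).2 s j) atTop (𝓝 0) := by
  obtain ⟨hl0, hl1⟩ := hlam
  have hgeo : Tendsto (fun L : ℕ => lam ^ L) atTop (𝓝 0) :=
    tendsto_pow_atTop_nhds_zero_of_lt_one hl0.le hl1
  intro s
  constructor
  · rw [Metric.tendsto_atTop]
    intro ε hε
    have h1 : Tendsto (fun L : ℕ => (1 - lam ^ L) ^ (1 / p)) atTop (𝓝 1) := by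
      have hsub : Tendsto (fun L : ℕ => 1 - lam ^ L) atTop (𝓝 (1 - 0)) :=
        tendsto_const_nhds.sub hgeo
      have := hsub.rpow_const (p := 1 / p) (Or.inr (by positivity))
      simpa using this
    obtain ⟨L₀, hL₀⟩ := (h1.eventually (eventually_gt_nhds
      (show (1:ℝ) - ε < 1 by linarith))).exists
    obtain ⟨ℓ, hLℓ, hwalk⟩ := exists_long_walk hcrit (L₀ + 1)
    refine ⟨ℓ, fun m hm => ?_⟩
    have hlow := mu_lower hn hA ⟨hl0, hl1⟩ hp ℓ (by omega) j hwalk m hm s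
    have hmono : (1 - lam ^ L₀) ^ (1 / p) ≤ (1 - lam ^ (ℓ - 1)) ^ (1 / p) := by
      apply Real.rpow_le_rpow
      · have := pow_le_one₀ hl0.le hl1.le (n := L₀); linarith
      · have := pow_le_pow_of_le_one hl0.le hl1.le (show L₀ ≤ ℓ - 1 by omega)
        linarith
      · positivity
    have hub := ((gmPow_mem hn hA ⟨hl0, hl1⟩ hp m s j).1).2
    rw [Real.dist_eq, abs_of_nonpos (by linarith)]
    linarith
  · rw [Metric.tendsto_atTop]
    intro ε hε
    have h2 : Tendsto (fun L : ℕ => (lam ^ L) ^ (1 / p)) atTop (𝓝 0) := by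
      have := hgeo.rpow_const (p := 1 / p) (Or.inr (by positivity))
      simpa [one_div, Real.zero_rpow (inv_ne_zero hp.ne')] using this
    obtain ⟨L₀, hL₀⟩ := (h2.eventually (eventually_lt_nhds hε)).exists
    obtain ⟨ℓ, hLℓ, hwalk⟩ := exists_long_walk hcrit (L₀ + 1)
    refine ⟨ℓ, fun m hm => ?_⟩
    have hup := nu_upper hn hA ⟨hl0, hl1⟩ hp ℓ (by omega) j hwalk m hm s
    have hmono : (lam ^ (ℓ - 1)) ^ (1 / p) ≤ (lam ^ L₀) ^ (1 / p) := by
      apply Real.rpow_le_rpow (by positivity)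
        (pow_le_pow_of_le_one hl0.le hl1.le (show L₀ ≤ ℓ - 1 by omega)) (by positivity)
    have hlb := ((gmPow_mem hn hA ⟨hl0, hl1⟩ hp m s j).2).1
    rw [Real.dist_eq, sub_zero, abs_of_nonneg hlb]
    linarith
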